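/- Consider a min-cost flow instance whose edge costs c_e ∈ [0,1] are independent random variables, each having a probability density function bounded from above by φ, and suppose at least two feasible integer flows exist. Let f* be a min-cost feasible integer flow and let Δ be the minimum cost of a directed cycle in the residual network of f*. Then for every ε > 0, the probability that Δ ≤ ε is at most 2εφm. -/

import Mathlib

open MeasureTheory

/-- A feasible integer flow: capacity constraints and budget (flow conservation)
constraints. -/
def IsFlow {V E : Type} [Fintype E] [DecidableEq V]
    (src tgt : E → V) (cap : E → ℕ) (bdg : V → ℤ) (f : E → ℤ) : Prop :=
  (∀ e, 0 ≤ f e ∧ f e ≤ (cap e : ℤ)) ∧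
  ∀ v, ((∑ e, if src e = v then f e else 0) - (∑ e, if tgt e = v then f e else 0)) = bdg v

/-- The cost `c · f` of an integer flow. -/
noncomputable def flowCost {E : Type} [Fintype E] (c : E → ℝ) (f : E → ℤ) : ℝ :=
  ∑ e, c e * (f e : ℝ)

/-- A residual arc is an edge together with a direction: `(e, true)` is the forward
copy of `e` and `(e, false)` the backward copy. This is the source of the arc. -/
def arcSrc {V E : Type} (src tgt : E → V) : E × Bool → V
  | (e, true) => src e
  | (e, false) => tgt e

/-- The target of a residual arc. -/
def arcTgt {V E : Type} (src tgt : E → V) : E × Bool → V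
  | (e, true) => tgt e
  | (e, false) => src e

/-- A residual arc exists in the residual network of the flow `f`: a forward arc of `e`
needs `f e < u e` and a backward arc needs `f e > 0`. -/
def arcValid {E : Type} (cap : E → ℕ) (f : E → ℤ) : E × Bool → Prop
  | (e, true) => f e < (cap e : ℤ)
  | (e, false) => 0 < f e

/-- The cost of a residual arc: `c e` for the forward and `-c e` for the backward copy. -/
def arcCost {E : Type} (c : E → ℝ) : E × Bool → ℝ
  | (e, true) => c e
  | (e, false) => - c e

/-- A (simple) directed cycle in the residual network of the flow `f`, given by its
distinct vertices `vtx 0, …, vtx (len-1)` and arcs `arc i : vtx i → vtx (i+1)`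
(indices cyclically); no edge of the graph is used in both directions. -/
def IsResidualCycle {V E : Type} (src tgt : E → V) (cap : E → ℕ) (f : E → ℤ)
    {len : ℕ} (vtx : Fin len → V) (arc : Fin len → E × Bool) : Prop :=
  0 < len ∧ Function.Injective vtx ∧
  (∀ i, arcValid cap f (arc i) ∧ arcSrc src tgt (arc i) = vtx i ∧
    arcTgt src tgt (arc i) = vtx ⟨((i : ℕ) + 1) % len, Nat.mod_lt _ i.pos⟩) ∧
  (∀ i j, (arc i).1 = (arc j).1 → (arc i).2 = (arc j).2)

open scoped Classical in
/-- Augmenting the flow `f` by one unit of flow along a cycle given by its arcs: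
increase `f e` by one for every forward arc of `e` on the cycle and decrease it by one
for every backward arc on the cycle. -/
noncomputable def augment {E : Type} {len : ℕ} (f : E → ℤ) (arc : Fin len → E × Bool) :
    E → ℤ :=
  fun e => f e + (if ∃ i, arc i = (e, true) then 1 else 0)
    - (if ∃ i, arc i = (e, false) then 1 else 0)

/-- The cost of a residual cycle: the sum of the costs of its arcs. -/
noncomputable def cycleCost {E : Type} {len : ℕ} (c : E → ℝ) (arc : Fin len → E × Bool) : ℝ :=
  ∑ i, arcCost c (arc i)

/- ================== auxiliary development ================== -/

open scoped Classical
open scoped ENNReal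

namespace RCP

variable {V E : Type} [Fintype V] [Fintype E] [DecidableEq V]

noncomputable def edgeVec (a : E × Bool) : E → ℤ :=
  fun e => if e = a.1 then (if a.2 then 1 else -1) else 0

noncomputable def cycVec {L : ℕ} (arcs : Fin L → E × Bool) : E → ℤ :=
  fun e => ∑ i, edgeVec (arcs i) e

def divg (src tgt : E → V) (f : E → ℤ) (v : V) : ℤ :=
  (∑ e, if src e = v then f e else 0) - (∑ e, if tgt e = v then f e else 0)

lemma sum_if_if (P : E → Prop) [DecidablePred P] (e0 : E) (c : ℤ) :
    (∑ e, if P e then (if e = e0 then c else 0) else 0) = if P e0 then c else 0 := by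
  have h : ∀ e ∈ Finset.univ, (if P e then (if e = e0 then c else 0) else 0)
      = (if e = e0 then (if P e then c else 0) else 0) := by
    intro e _
    by_cases h1 : P e <;> by_cases h2 : e = e0 <;> simp [h1, h2]
  rw [Finset.sum_congr rfl h, Finset.sum_ite_eq' Finset.univ e0 (fun e => if P e then c else 0)]
  simp

lemma sum_ite_add (P : E → Prop) [DecidablePred P] (f g : E → ℤ) :
    (∑ e, if P e then f e + g e else 0)
      = (∑ e, if P e then f e else 0) + (∑ e, if P e then g e else 0) := by
  rw [← Finset.sum_add_distrib]
  refine Finset.sum_congr rfl fun e _ => ?_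
  by_cases h : P e <;> simp [h]

lemma divg_add (src tgt : E → V) (f g : E → ℤ) (v : V) :
    divg src tgt (fun e => f e + g e) v = divg src tgt f v + divg src tgt g v := by
  unfold divg
  rw [sum_ite_add, sum_ite_add]
  ring

lemma sum_ite_sub (P : E → Prop) [DecidablePred P] (f g : E → ℤ) :
    (∑ e, if P e then f e - g e else 0)
      = (∑ e, if P e then f e else 0) - (∑ e, if P e then g e else 0) := by
  rw [← Finset.sum_sub_distrib]
  refine Finset.sum_congr rfl fun e _ => ?_
  by_cases h : P e <;> simp [h]

lemma divg_sub (src tgt : E → V) (f g : E → ℤ) (v : V) :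
    divg src tgt (fun e => f e - g e) v = divg src tgt f v - divg src tgt g v := by
  unfold divg
  rw [sum_ite_sub, sum_ite_sub]
  ring

lemma sum_ite_sum (P : E → Prop) [DecidablePred P] {L : ℕ} (F : Fin L → E → ℤ) :
    (∑ e, if P e then (∑ i, F i e) else 0) = ∑ i, ∑ e, if P e then F i e else 0 := by
  rw [Finset.sum_comm]
  refine Finset.sum_congr rfl fun e _ => ?_
  by_cases h : P e <;> simp [h]

lemma divg_sum (src tgt : E → V) {L : ℕ} (F : Fin L → E → ℤ) (v : V) :
    divg src tgt (fun e => ∑ i, F i e) v = ∑ i, divg src tgt (F i) v := by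
  unfold divg
  rw [sum_ite_sum, sum_ite_sum, Finset.sum_sub_distrib]

lemma divg_edgeVec (src tgt : E → V) (a : E × Bool) (v : V) :
    divg src tgt (edgeVec a) v
      = (if arcSrc src tgt a = v then 1 else 0) - (if arcTgt src tgt a = v then 1 else 0) := by
  obtain ⟨e, b⟩ := a
  cases b <;>
    simp only [divg, edgeVec, arcSrc, arcTgt, sum_if_if] <;> split_ifs <;> simp_all

lemma rot_bij {L : ℕ} (hL : 0 < L) :
    Function.Bijective (fun i : Fin L => (⟨((i : ℕ) + 1) % L, Nat.mod_lt _ hL⟩ : Fin L)) := by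
  rw [Fintype.bijective_iff_injective_and_card]
  refine ⟨?_, rfl⟩
  intro i j h
  have h' : ((i : ℕ) + 1) % L = ((j : ℕ) + 1) % L := congrArg Fin.val h
  have hi := i.2
  have hj := j.2
  apply Fin.ext
  rcases Nat.lt_or_ge ((i : ℕ) + 1) L with h1 | h1 <;>
    rcases Nat.lt_or_ge ((j : ℕ) + 1) L with h2 | h2
  · rw [Nat.mod_eq_of_lt h1, Nat.mod_eq_of_lt h2] at h'; omega
  · have hj' : (j : ℕ) + 1 = L := by omega
    rw [Nat.mod_eq_of_lt h1, hj', Nat.mod_self] at h'; omega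
  · have hi' : (i : ℕ) + 1 = L := by omega
    rw [Nat.mod_eq_of_lt h2, hi', Nat.mod_self] at h'; omega
  · omega

lemma divg_cycVec (src tgt : E → V) {L : ℕ} (hL : 0 < L) (arcs : Fin L → E × Bool)
    (hcyc : ∀ i : Fin L, arcTgt src tgt (arcs i)
      = arcSrc src tgt (arcs ⟨((i : ℕ) + 1) % L, Nat.mod_lt _ hL⟩)) (v : V) :
    divg src tgt (cycVec arcs) v = 0 := by
  have h1 : divg src tgt (cycVec arcs) v = ∑ i, divg src tgt (edgeVec (arcs i)) v :=
    divg_sum src tgt _ v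
  rw [h1]
  have h2 : ∀ i : Fin L, divg src tgt (edgeVec (arcs i)) v
      = (if arcSrc src tgt (arcs i) = v then 1 else 0)
        - (if arcSrc src tgt (arcs ⟨((i : ℕ) + 1) % L, Nat.mod_lt _ hL⟩) = v then 1 else 0) := by
    intro i
    rw [divg_edgeVec, hcyc i]
  rw [Finset.sum_congr rfl fun i _ => h2 i, Finset.sum_sub_distrib]
  rw [(rot_bij hL).sum_comp (fun j : Fin L => if arcSrc src tgt (arcs j) = v then (1:ℤ) else 0)]
  ring

lemma cycVec_eq_one {L : ℕ} {arcs : Fin L → E × Bool}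
    (hinj : Function.Injective fun i => (arcs i).1) {i : Fin L} {e : E}
    (h : arcs i = (e, true)) : cycVec arcs e = 1 := by
  unfold cycVec
  rw [Finset.sum_eq_single i]
  · rw [h]; simp [edgeVec]
  · intro j _ hj
    have hje : (arcs j).1 ≠ e := by
      intro hc
      exact hj (hinj (a₁ := j) (a₂ := i) (by show (arcs j).1 = (arcs i).1; rw [hc, h]))
    simp [edgeVec, hje, Ne.symm hje]
  · intro hc; exact absurd (Finset.mem_univ i) hc

lemma cycVec_eq_neg_one {L : ℕ} {arcs : Fin L → E × Bool}
    (hinj : Function.Injective fun i => (arcs i).1) {i : Fin L} {e : E}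
    (h : arcs i = (e, false)) : cycVec arcs e = -1 := by
  unfold cycVec
  rw [Finset.sum_eq_single i]
  · rw [h]; simp [edgeVec]
  · intro j _ hj
    have hje : (arcs j).1 ≠ e := by
      intro hc
      exact hj (hinj (a₁ := j) (a₂ := i) (by show (arcs j).1 = (arcs i).1; rw [hc, h]))
    simp [edgeVec, hje, Ne.symm hje]
  · intro hc; exact absurd (Finset.mem_univ i) hc

lemma cycVec_eq_zero {L : ℕ} {arcs : Fin L → E × Bool} {e : E}
    (h : ∀ i, (arcs i).1 ≠ e) : cycVec arcs e = 0 := by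
  unfold cycVec
  refine Finset.sum_eq_zero fun i _ => ?_
  simp [edgeVec, Ne.symm (h i)]

lemma flowCost_add (c : E → ℝ) (f g : E → ℤ) :
    flowCost c (fun e => f e + g e) = flowCost c f + flowCost c g := by
  unfold flowCost
  rw [← Finset.sum_add_distrib]
  refine Finset.sum_congr rfl fun e _ => ?_
  push_cast
  ring

lemma flowCost_sub (c : E → ℝ) (f g : E → ℤ) :
    flowCost c (fun e => f e - g e) = flowCost c f - flowCost c g := by
  unfold flowCost
  rw [← Finset.sum_sub_distrib]
  refine Finset.sum_congr rfl fun e _ => ?_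
  push_cast
  ring

lemma flowCost_cycVec (c : E → ℝ) {L : ℕ} (arcs : Fin L → E × Bool) :
    flowCost c (cycVec arcs) = cycleCost c arcs := by
  unfold flowCost cycVec cycleCost
  have h1 : ∀ e, (((∑ i, edgeVec (arcs i) e) : ℤ) : ℝ) = ∑ i, ((edgeVec (arcs i) e : ℤ) : ℝ) := by
    intro e; push_cast; ring
  calc (∑ e, c e * ((∑ i, edgeVec (arcs i) e : ℤ) : ℝ))
      = ∑ e, ∑ i, c e * ((edgeVec (arcs i) e : ℤ) : ℝ) := by
        refine Finset.sum_congr rfl fun e _ => ?_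
        rw [h1, Finset.mul_sum]
    _ = ∑ i, ∑ e, c e * ((edgeVec (arcs i) e : ℤ) : ℝ) := Finset.sum_comm
    _ = ∑ i, arcCost c (arcs i) := by
        refine Finset.sum_congr rfl fun i _ => ?_
        obtain ⟨e0, b⟩ := arcs i
        cases b <;>
          simp [edgeVec, arcCost, Finset.sum_ite_eq' Finset.univ e0]

lemma augment_eq_add_cycVec {L : ℕ} (f : E → ℤ) (arcs : Fin L → E × Bool)
    (hinj : Function.Injective fun i => (arcs i).1) :
    augment f arcs = fun e => f e + cycVec arcs e := by
  funext e
  unfold augment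
  by_cases he : ∃ i, (arcs i).1 = e
  · obtain ⟨i0, hi0⟩ := he
    rcases Bool.eq_false_or_eq_true (arcs i0).2 with hb | hb
    · have harc : arcs i0 = (e, true) := by
        rw [← hi0, ← hb]
      have h1 : ∃ i, arcs i = (e, true) := ⟨i0, harc⟩
      have h2 : ¬ (∃ i, arcs i = (e, false)) := by
        rintro ⟨j, hj⟩
        have hji : j = i0 := hinj (a₁ := j) (a₂ := i0)
          (by show (arcs j).1 = (arcs i0).1; rw [hj, harc])
        rw [hji, harc] at hj
        simp at hj
      rw [if_pos h1, if_neg h2, cycVec_eq_one hinj harc]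
      ring
    · have harc : arcs i0 = (e, false) := by
        rw [← hi0, ← hb]
      have h1 : ¬ (∃ i, arcs i = (e, true)) := by
        rintro ⟨j, hj⟩
        have hji : j = i0 := hinj (a₁ := j) (a₂ := i0)
          (by show (arcs j).1 = (arcs i0).1; rw [hj, harc])
        rw [hji, harc] at hj
        simp at hj
      have h2 : ∃ i, arcs i = (e, false) := ⟨i0, harc⟩
      rw [if_neg h1, if_pos h2, cycVec_eq_neg_one hinj harc]
      ring
  · push_neg at he
    have h1 : ¬ (∃ i, arcs i = (e, true)) := by
      rintro ⟨j, hj⟩; exact he j (by rw [hj])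
    have h2 : ¬ (∃ i, arcs i = (e, false)) := by
      rintro ⟨j, hj⟩; exact he j (by rw [hj])
    rw [if_neg h1, if_neg h2, cycVec_eq_zero he]
    ring


lemma extract_cycle (src tgt : E → V) (z : E → ℤ) (hdiv : ∀ v, divg src tgt z v = 0)
    (hz : z ≠ 0) :
    ∃ χ : E → ℤ, (∀ v, divg src tgt χ v = 0) ∧ χ ≠ 0 ∧
      ∀ e, (χ e = 1 ∧ 0 < z e) ∨ (χ e = -1 ∧ z e < 0) ∨ χ e = 0 := by
  classical
  set Rm : E × Bool → Prop := fun a => if a.2 then 0 < z a.1 else z a.1 < 0 with hRm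
  have cont : ∀ a, Rm a → ∃ b, Rm b ∧ arcSrc src tgt b = arcTgt src tgt a := by
    intro a ha
    by_contra hno
    push_neg at hno
    have h1 : ∀ e, src e = arcTgt src tgt a → z e ≤ 0 := by
      intro e hsw
      by_contra hpos
      push_neg at hpos
      exact hno (e, true) (by simpa [Rm] using hpos) hsw
    have h2 : ∀ e, tgt e = arcTgt src tgt a → 0 ≤ z e := by
      intro e htw
      by_contra hneg
      push_neg at hneg
      exact hno (e, false) (by simpa [Rm] using hneg) htw
    have hout : (∑ e, if src e = arcTgt src tgt a then z e else 0) ≤ 0 := by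
      refine Finset.sum_nonpos fun e _ => ?_
      by_cases h : src e = arcTgt src tgt a
      · simpa [h] using h1 e h
      · simp [h]
    have hin : 0 ≤ (∑ e, if tgt e = arcTgt src tgt a then z e else 0) := by
      refine Finset.sum_nonneg fun e _ => ?_
      by_cases h : tgt e = arcTgt src tgt a
      · simpa [h] using h2 e h
      · simp [h]
    have hdw := hdiv (arcTgt src tgt a)
    unfold divg at hdw
    obtain ⟨e0, b⟩ := a
    cases b
    · -- backward arc: z e0 < 0, arcTgt = src e0
      have hz0 : z e0 < 0 := by simpa [Rm] using ha
      have hweq : src e0 = arcTgt src tgt (e0, false) := rfl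
      have hsplit := Finset.add_sum_erase Finset.univ
        (fun e => if src e = arcTgt src tgt (e0, false) then z e else 0) (Finset.mem_univ e0)
      have hrest : (∑ e ∈ Finset.univ.erase e0,
          if src e = arcTgt src tgt (e0, false) then z e else 0) ≤ 0 := by
        refine Finset.sum_nonpos fun e _ => ?_
        by_cases h : src e = arcTgt src tgt (e0, false)
        · simpa [h] using h1 e h
        · simp [h]
      have hterm : (if src e0 = arcTgt src tgt (e0, false) then z e0 else 0) = z e0 := by
        rw [if_pos hweq]
      have hSout : (∑ e, if src e = arcTgt src tgt (e0, false) then z e else 0) ≤ z e0 := by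
        calc (∑ e, if src e = arcTgt src tgt (e0, false) then z e else 0)
            = (if src e0 = arcTgt src tgt (e0, false) then z e0 else 0)
              + ∑ e ∈ Finset.univ.erase e0,
                  (if src e = arcTgt src tgt (e0, false) then z e else 0) := hsplit.symm
          _ ≤ z e0 := by rw [hterm]; linarith [hrest]
      linarith [hSout, hin, hdw, hz0]
    · -- forward arc: 0 < z e0, arcTgt = tgt e0
      have hz0 : 0 < z e0 := by simpa [Rm] using ha
      have hweq : tgt e0 = arcTgt src tgt (e0, true) := rfl
      have hsplit := Finset.add_sum_erase Finset.univ
        (fun e => if tgt e = arcTgt src tgt (e0, true) then z e else 0) (Finset.mem_univ e0)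
      have hrest : 0 ≤ (∑ e ∈ Finset.univ.erase e0,
          if tgt e = arcTgt src tgt (e0, true) then z e else 0) := by
        refine Finset.sum_nonneg fun e _ => ?_
        by_cases h : tgt e = arcTgt src tgt (e0, true)
        · simpa [h] using h2 e h
        · simp [h]
      have hterm : (if tgt e0 = arcTgt src tgt (e0, true) then z e0 else 0) = z e0 := by
        rw [if_pos hweq]
      have hSin : z e0 ≤ (∑ e, if tgt e = arcTgt src tgt (e0, true) then z e else 0) := by
        calc z e0 = (if tgt e0 = arcTgt src tgt (e0, true) then z e0 else 0) := hterm.symm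
          _ ≤ (if tgt e0 = arcTgt src tgt (e0, true) then z e0 else 0)
              + ∑ e ∈ Finset.univ.erase e0,
                  (if tgt e = arcTgt src tgt (e0, true) then z e else 0) := by linarith [hrest]
          _ = _ := hsplit
      linarith [hSin, hout, hdw, hz0]
  -- start
  obtain ⟨e0, he0⟩ : ∃ e, z e ≠ 0 := by
    by_contra h
    push_neg at h
    exact hz (funext fun e => h e)
  have ha0 : Rm (e0, if 0 < z e0 then true else false) := by
    by_cases h : 0 < z e0 <;> simp [Rm, h] <;> omega
  let step : {a : E × Bool // Rm a} → {a : E × Bool // Rm a} := fun p =>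
    ⟨Classical.choose (cont p.1 p.2), (Classical.choose_spec (cont p.1 p.2)).1⟩
  let sq : ℕ → {a : E × Bool // Rm a} := fun n => step^[n] ⟨_, ha0⟩
  have hlink : ∀ n, arcSrc src tgt (sq (n + 1)).1 = arcTgt src tgt (sq n).1 := by
    intro n
    have h : sq (n + 1) = step (sq n) := Function.iterate_succ_apply' step n _
    rw [h]
    exact (Classical.choose_spec (cont (sq n).1 (sq n).2)).2
  have hex : ∃ m, ∃ n, n < m ∧ arcSrc src tgt (sq n).1 = arcSrc src tgt (sq m).1 := by
    obtain ⟨i, j, hij, hwij⟩ := Fintype.exists_ne_map_eq_of_card_lt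
      (fun k : Fin (Fintype.card V + 1) => arcSrc src tgt (sq (k : ℕ)).1) (by simp)
    rcases Nat.lt_or_ge (i : ℕ) (j : ℕ) with h | h
    · exact ⟨j, i, h, hwij⟩
    · have hji : (j : ℕ) < (i : ℕ) := by
        rcases Nat.lt_or_ge (j : ℕ) (i : ℕ) with h' | h'
        · exact h'
        · exact absurd (Fin.ext (by omega : (i : ℕ) = (j : ℕ))) hij
      exact ⟨i, j, hji, hwij.symm⟩
  set M := Nat.find hex with hM
  obtain ⟨N, hNM, hwNM⟩ := Nat.find_spec hex
  have hdist : ∀ i j : ℕ, i < j → j < M →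
      arcSrc src tgt (sq i).1 ≠ arcSrc src tgt (sq j).1 := by
    intro i j h1 h2 heq
    exact Nat.find_min hex h2 ⟨i, h1, heq⟩
  set L := M - N with hLdef
  have hL : 0 < L := by omega
  set arcs : Fin L → E × Bool := fun k => (sq (N + (k : ℕ))).1 with harcs
  have hmem : ∀ k : Fin L, Rm (arcs k) := fun k => (sq (N + (k : ℕ))).2
  have hcyc : ∀ k : Fin L, arcTgt src tgt (arcs k)
      = arcSrc src tgt (arcs ⟨((k : ℕ) + 1) % L, Nat.mod_lt _ hL⟩) := by
    intro k
    have hk := k.2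
    show arcTgt src tgt (sq (N + (k : ℕ))).1
      = arcSrc src tgt (sq (N + ((k : ℕ) + 1) % L)).1
    by_cases hkl : (k : ℕ) + 1 < L
    · rw [Nat.mod_eq_of_lt hkl]
      exact (hlink (N + (k : ℕ))).symm
    · have hkL : (k : ℕ) + 1 = L := by omega
      have hmod : ((k : ℕ) + 1) % L = 0 := by rw [hkL, Nat.mod_self]
      rw [hmod]
      have h1 := hlink (N + (k : ℕ))
      have h2 : N + (k : ℕ) + 1 = M := by omega
      rw [h2] at h1
      calc arcTgt src tgt (sq (N + (k : ℕ))).1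
          = arcSrc src tgt (sq M).1 := h1.symm
        _ = arcSrc src tgt (sq N).1 := hwNM.symm
        _ = arcSrc src tgt (sq (N + 0)).1 := by rw [Nat.add_zero]
  have hinj : Function.Injective fun k : Fin L => (arcs k).1 := by
    intro k k' hkk
    have hkk' : (arcs k).1 = (arcs k').1 := hkk
    have hb : (arcs k).2 = (arcs k').2 := by
      have h1 := hmem k
      have h2 := hmem k'
      rcases Bool.eq_false_or_eq_true (arcs k).2 with hb1 | hb1 <;>
        rcases Bool.eq_false_or_eq_true (arcs k').2 with hb2 | hb2
      · rw [hb1, hb2]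
      · exfalso
        have h1' : 0 < z (arcs k).1 := by simpa [hRm, hb1] using h1
        have h2' : z (arcs k').1 < 0 := by simpa [hRm, hb2] using h2
        rw [hkk'] at h1'
        omega
      · exfalso
        have h1' : z (arcs k).1 < 0 := by simpa [hRm, hb1] using h1
        have h2' : 0 < z (arcs k').1 := by simpa [hRm, hb2] using h2
        rw [hkk'] at h1'
        omega
      · rw [hb1, hb2]
    have harceq : arcs k = arcs k' := Prod.ext hkk' hb
    by_contra hne
    have hsrc : arcSrc src tgt (sq (N + (k : ℕ))).1 = arcSrc src tgt (sq (N + (k' : ℕ))).1 := by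
      have : (sq (N + (k : ℕ))).1 = (sq (N + (k' : ℕ))).1 := harceq
      rw [this]
    have hkval : (k : ℕ) ≠ (k' : ℕ) := fun h => hne (Fin.ext h)
    have hk2 := k.2
    have hk2' := k'.2
    rcases Nat.lt_or_ge (N + (k : ℕ)) (N + (k' : ℕ)) with h | h
    · exact hdist _ _ h (by omega) hsrc
    · exact hdist _ _ (by omega) (by omega) hsrc.symm
  refine ⟨cycVec arcs, fun v => divg_cycVec src tgt hL arcs hcyc v, ?_, ?_⟩
  · -- nonzero
    set k0 : Fin L := ⟨0, hL⟩
    intro hzero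
    have : cycVec arcs (arcs k0).1 = 0 := by rw [hzero]; rfl
    rcases Bool.eq_false_or_eq_true (arcs k0).2 with hb | hb
    · rw [cycVec_eq_one hinj (i := k0) (by rw [← hb])] at this
      exact one_ne_zero this
    · rw [cycVec_eq_neg_one hinj (i := k0) (by rw [← hb])] at this
      exact (by norm_num : (-1 : ℤ) ≠ 0) this
  · intro e
    by_cases he : ∃ k, (arcs k).1 = e
    · obtain ⟨k, hk⟩ := he
      have hm := hmem k
      rcases Bool.eq_false_or_eq_true (arcs k).2 with hb | hb
      · left
        constructor
        · exact cycVec_eq_one hinj (i := k) (by rw [← hk, ← hb])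
        · rw [hRm] at hm
          rw [hb] at hm
          simpa [hk] using hm
      · right; left
        constructor
        · exact cycVec_eq_neg_one hinj (i := k) (by rw [← hk, ← hb])
        · rw [hRm] at hm
          rw [hb] at hm
          simpa [hk] using hm
    · right; right
      push_neg at he
      exact cycVec_eq_zero he

noncomputable def flows (src tgt : E → V) (cap : E → ℕ) (bdg : V → ℤ) : Finset (E → ℤ) :=
  (Fintype.piFinset fun e => Finset.Icc (0 : ℤ) (cap e)).filter (IsFlow src tgt cap bdg)

lemma mem_flows {src tgt : E → V} {cap : E → ℕ} {bdg : V → ℤ} {f : E → ℤ} :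
    f ∈ flows src tgt cap bdg ↔ IsFlow src tgt cap bdg f := by
  unfold flows
  rw [Finset.mem_filter, Fintype.mem_piFinset]
  constructor
  · exact fun h => h.2
  · intro h
    exact ⟨fun e => Finset.mem_Icc.2 ⟨(h.1 e).1, (h.1 e).2⟩, h⟩

lemma augment_flow {src tgt : E → V} {cap : E → ℕ} {bdg : V → ℤ} {f : E → ℤ}
    (hf : IsFlow src tgt cap bdg f)
    {len : ℕ} {vtx : Fin len → V} {arc : Fin len → E × Bool}
    (hc : IsResidualCycle src tgt cap f vtx arc) (c : E → ℝ) :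
    IsFlow src tgt cap bdg (augment f arc) ∧ augment f arc ≠ f ∧
      flowCost c (augment f arc) = flowCost c f + cycleCost c arc := by
  obtain ⟨hlen, hvinj, h3, h4⟩ := hc
  have hinj : Function.Injective fun i => (arc i).1 := by
    intro i j hij
    have hij' : (arc i).1 = (arc j).1 := hij
    have hb : (arc i).2 = (arc j).2 := h4 i j hij'
    have harceq : arc i = arc j := Prod.ext hij' hb
    have hvv : vtx i = vtx j := by
      rw [← (h3 i).2.1, ← (h3 j).2.1, harceq]
    exact hvinj hvv
  have haug := augment_eq_add_cycVec f arc hinj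
  have hχ : ∀ e, (cycVec arc e = 1 ∧ ∃ i, arc i = (e, true))
      ∨ (cycVec arc e = -1 ∧ ∃ i, arc i = (e, false)) ∨ cycVec arc e = 0 := by
    intro e
    by_cases he : ∃ i, (arc i).1 = e
    · obtain ⟨i, hi⟩ := he
      rcases Bool.eq_false_or_eq_true (arc i).2 with hbt | hbt
      · have harc : arc i = (e, true) := by rw [← hi, ← hbt]
        exact Or.inl ⟨cycVec_eq_one hinj harc, i, harc⟩
      · have harc : arc i = (e, false) := by rw [← hi, ← hbt]
        exact Or.inr (Or.inl ⟨cycVec_eq_neg_one hinj harc, i, harc⟩)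
    · push_neg at he
      exact Or.inr (Or.inr (cycVec_eq_zero he))
  have hcyc : ∀ i : Fin len, arcTgt src tgt (arc i)
      = arcSrc src tgt (arc ⟨((i : ℕ) + 1) % len, Nat.mod_lt _ hlen⟩) := by
    intro i
    rw [(h3 i).2.2, (h3 (⟨((i : ℕ) + 1) % len, Nat.mod_lt _ hlen⟩ : Fin len)).2.1]
  refine ⟨⟨?_, ?_⟩, ?_, ?_⟩
  · intro e
    have hfe := hf.1 e
    show 0 ≤ augment f arc e ∧ augment f arc e ≤ (cap e : ℤ)
    rw [haug]
    show 0 ≤ f e + cycVec arc e ∧ f e + cycVec arc e ≤ (cap e : ℤ)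
    rcases hχ e with ⟨h1, i, hi⟩ | ⟨h1, i, hi⟩ | h1
    · have hv : f e < (cap e : ℤ) := by
        have hval := (h3 i).1
        rw [hi] at hval
        exact hval
      rw [h1]
      omega
    · have hv : 0 < f e := by
        have hval := (h3 i).1
        rw [hi] at hval
        exact hval
      rw [h1]
      omega
    · rw [h1]
      omega
  · intro v
    show divg src tgt (augment f arc) v = bdg v
    rw [haug, divg_add src tgt f (cycVec arc) v,
      divg_cycVec src tgt hlen arc hcyc v, add_zero]
    exact hf.2 v
  · intro heq
    set i0 : Fin len := ⟨0, hlen⟩ with hi0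
    have h := congrFun heq (arc i0).1
    rw [haug] at h
    simp only at h
    rcases Bool.eq_false_or_eq_true (arc i0).2 with hbt | hbt
    · rw [cycVec_eq_one hinj (i := i0) (by rw [← hbt])] at h
      omega
    · rw [cycVec_eq_neg_one hinj (i := i0) (by rw [← hbt])] at h
      omega
  · rw [haug, flowCost_add, flowCost_cycVec]

noncomputable def rkE : E → ℕ := fun e => ((Fintype.equivFin E) e : ℕ)

lemma rkE_inj : Function.Injective (rkE (E := E)) := by
  intro a b h
  exact (Fintype.equivFin E).injective (Fin.ext h)

noncomputable def Lfun (f : E → ℤ) : ℤ := ∑ e, 3 ^ rkE e * f e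

lemma Lfun_add (f g : E → ℤ) : Lfun (fun e => f e + g e) = Lfun f + Lfun g := by
  unfold Lfun
  rw [← Finset.sum_add_distrib]
  exact Finset.sum_congr rfl fun e _ => by ring

lemma Lfun_sub (f g : E → ℤ) : Lfun (fun e => f e - g e) = Lfun f - Lfun g := by
  unfold Lfun
  rw [← Finset.sum_sub_distrib]
  exact Finset.sum_congr rfl fun e _ => by ring

lemma geom3 (n : ℕ) : 2 * (∑ r ∈ Finset.range n, (3 : ℤ) ^ r) + 1 = 3 ^ n := by
  induction n with
  | zero => simp
  | succ n ih =>
    rw [Finset.sum_range_succ, pow_succ]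
    linarith

lemma Lkey (χ : E → ℤ) (hval : ∀ e, χ e = 1 ∨ χ e = -1 ∨ χ e = 0) (hne : χ ≠ 0) :
    Lfun χ ≠ 0 := by
  set S : Finset E := Finset.univ.filter (fun e => χ e ≠ 0) with hS
  have hSne : S.Nonempty := by
    obtain ⟨e, he⟩ : ∃ e, χ e ≠ 0 := Function.ne_iff.1 hne
    exact ⟨e, by simp [hS, he]⟩
  obtain ⟨em, hem, hmax⟩ := S.exists_max_image rkE hSne
  have hem0 : χ em ≠ 0 := by
    have := hem
    rw [hS, Finset.mem_filter] at this
    exact this.2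
  have hLsplit : Lfun χ = 3 ^ rkE em * χ em + ∑ e ∈ S.erase em, 3 ^ rkE e * χ e := by
    unfold Lfun
    rw [← Finset.sum_subset (Finset.subset_univ S)
      (fun e _ he => by
        have : χ e = 0 := by
          by_contra hcc
          exact he (by simp [hS, hcc])
        rw [this]; ring)]
    rw [← Finset.add_sum_erase S _ hem]
  set T : ℤ := ∑ e ∈ S.erase em, 3 ^ rkE e * χ e with hT
  have habs1 : |T| ≤ ∑ e ∈ S.erase em, (3 : ℤ) ^ rkE e := by
    refine le_trans (Finset.abs_sum_le_sum_abs _ _) (Finset.sum_le_sum fun e _ => ?_)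
    rcases hval e with h | h | h <;> rw [h] <;> simp <;> positivity
  have himg : ∑ e ∈ S.erase em, (3 : ℤ) ^ rkE e
      = ∑ r ∈ (S.erase em).image rkE, (3 : ℤ) ^ r := by
    rw [Finset.sum_image (fun a _ b _ h => rkE_inj h)]
  have hsub : (S.erase em).image rkE ⊆ Finset.range (rkE em) := by
    intro r hr
    obtain ⟨e, he, rfl⟩ := Finset.mem_image.1 hr
    rw [Finset.mem_range]
    have he1 : e ∈ S := Finset.mem_of_mem_erase he
    have hne' : e ≠ em := Finset.ne_of_mem_erase he
    have hle := hmax e he1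
    have hnee : rkE e ≠ rkE em := fun h => hne' (rkE_inj h)
    omega
  have hle2 : ∑ r ∈ (S.erase em).image rkE, (3 : ℤ) ^ r
      ≤ ∑ r ∈ Finset.range (rkE em), (3 : ℤ) ^ r :=
    Finset.sum_le_sum_of_subset_of_nonneg hsub (fun r _ _ => by positivity)
  have hg := geom3 (rkE em)
  have hRnn : 0 ≤ ∑ r ∈ Finset.range (rkE em), (3 : ℤ) ^ r :=
    Finset.sum_nonneg fun r _ => by positivity
  have habs : |T| ≤ ∑ r ∈ Finset.range (rkE em), (3 : ℤ) ^ r := by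
    calc |T| ≤ _ := habs1
      _ = _ := himg
      _ ≤ _ := hle2
  have habs' := abs_le.1 habs
  intro h0
  rw [hLsplit] at h0
  rcases hval em with h | h | h
  · rw [h, mul_one] at h0
    linarith [hg, habs'.1, habs'.2]
  · rw [h] at h0
    simp only [mul_neg, mul_one] at h0
    linarith [hg, habs'.1, habs'.2]
  · exact hem0 h

noncomputable def restCost (d : E) (c : E → ℝ) (f : E → ℤ) : ℝ :=
  ∑ e ∈ Finset.univ.erase d, c e * (f e : ℝ)

lemma flowCost_eq_rest (d : E) (c : E → ℝ) (f : E → ℤ) :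
    flowCost c f = restCost d c f + c d * (f d : ℝ) := by
  unfold flowCost restCost
  rw [← Finset.add_sum_erase Finset.univ _ (Finset.mem_univ d)]
  ring

lemma restCost_update (d : E) (c : E → ℝ) (t : ℝ) (f : E → ℤ) :
    restCost d (Function.update c d t) f = restCost d c f := by
  unfold restCost
  refine Finset.sum_congr rfl fun e he => ?_
  rw [Function.update_of_ne (Finset.ne_of_mem_erase he)]

noncomputable def classSet (src tgt : E → V) (cap : E → ℕ) (bdg : V → ℤ) (d : E) (k : ℤ) :
    Finset (E → ℤ) :=
  (flows src tgt cap bdg).filter (fun f => f d = k)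

noncomputable def theta (src tgt : E → V) (cap : E → ℕ) (bdg : V → ℤ) (d : E) (k₀ k₁ : ℤ)
    (c : E → ℝ) : ℝ :=
  if h : (classSet src tgt cap bdg d k₀).Nonempty ∧ (classSet src tgt cap bdg d k₁).Nonempty then
    (classSet src tgt cap bdg d k₀).inf' h.1 (restCost d c)
      - (classSet src tgt cap bdg d k₁).inf' h.2 (restCost d c)
  else 0

lemma main_cover (src tgt : E → V) (cap : E → ℕ) (bdg : V → ℤ) (ε : ℝ) (hε : 0 < ε)
    (c : E → ℝ)
    (hc : ∃ fstar : E → ℤ, IsFlow src tgt cap bdg fstar ∧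
      (∀ f, IsFlow src tgt cap bdg f → flowCost c fstar ≤ flowCost c f) ∧
      ∃ (len : ℕ) (vtx : Fin len → V) (arc : Fin len → E × Bool),
        IsResidualCycle src tgt cap fstar vtx arc ∧ cycleCost c arc ≤ ε) :
    ∃ d : E,
      (theta src tgt cap bdg d 0 1 c ≤ c d ∧ c d ≤ theta src tgt cap bdg d 0 1 c + ε) ∨
      (theta src tgt cap bdg d ((cap d : ℤ) - 1) (cap d : ℤ) c - ε ≤ c d ∧
        c d ≤ theta src tgt cap bdg d ((cap d : ℤ) - 1) (cap d : ℤ) c) := by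
  classical
  obtain ⟨fs, hfsFlow, hfsOpt, len, vtx, arc, hcyc, hcost⟩ := hc
  set F := flows src tgt cap bdg with hF
  have hfsF : fs ∈ F := mem_flows.2 hfsFlow
  obtain ⟨f₀, hf₀F, hf₀min⟩ := F.exists_min_image (flowCost c) ⟨fs, hfsF⟩
  set Opt : Finset (E → ℤ) := F.filter (fun f => ∀ k ∈ F, flowCost c f ≤ flowCost c k)
    with hOptdef
  have hf₀Opt : f₀ ∈ Opt := Finset.mem_filter.2 ⟨hf₀F, hf₀min⟩
  obtain ⟨vstar, hvOpt, hvLmin⟩ := Opt.exists_min_image Lfun ⟨f₀, hf₀Opt⟩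
  have hvF : vstar ∈ F := (Finset.mem_filter.1 hvOpt).1
  have hvmin : ∀ k ∈ F, flowCost c vstar ≤ flowCost c k := (Finset.mem_filter.1 hvOpt).2
  set opt := flowCost c vstar with hopt
  have hfscost : flowCost c fs = opt :=
    le_antisymm (hfsOpt vstar (mem_flows.1 hvF)) (hvmin fs hfsF)
  obtain ⟨hgFlow, hgne, hgcost⟩ := augment_flow hfsFlow hcyc c
  obtain ⟨h₀, h₀F, h₀ne, h₀cost⟩ : ∃ k, k ∈ F ∧ k ≠ vstar ∧ flowCost c k ≤ opt + ε := by
    by_cases hgv : augment fs arc = vstar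
    · refine ⟨fs, hfsF, ?_, by rw [hfscost]; linarith⟩
      intro hfsv
      rw [← hfsv] at hgv
      exact hgne hgv
    · exact ⟨augment fs arc, mem_flows.2 hgFlow, hgv, by rw [hgcost, hfscost]; linarith⟩
  set H : Finset (E → ℤ) := F.filter (fun k => k ≠ vstar ∧ flowCost c k ≤ opt + ε) with hHdef
  have hHne : H.Nonempty := ⟨h₀, Finset.mem_filter.2 ⟨h₀F, h₀ne, h₀cost⟩⟩
  obtain ⟨h, hhH, hhmin⟩ := H.exists_min_image (fun k => ∑ e, (k e - vstar e).natAbs) hHne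
  obtain ⟨hhF, hhne, hhcost⟩ : h ∈ F ∧ h ≠ vstar ∧ flowCost c h ≤ opt + ε := by
    have := Finset.mem_filter.1 hhH
    exact ⟨this.1, this.2.1, this.2.2⟩
  have hhFlow : IsFlow src tgt cap bdg h := mem_flows.1 hhF
  have hvFlow : IsFlow src tgt cap bdg vstar := mem_flows.1 hvF
  have hzdiv : ∀ v, divg src tgt (fun e => h e - vstar e) v = 0 := by
    intro v
    have h1 : divg src tgt h v = bdg v := hhFlow.2 v
    have h2 : divg src tgt vstar v = bdg v := hvFlow.2 v
    rw [divg_sub, h1, h2]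
    ring
  have hzne : (fun e => h e - vstar e) ≠ 0 := by
    intro h0
    apply hhne
    funext e
    have := congrFun h0 e
    simp only [Pi.zero_apply] at this
    omega
  obtain ⟨χ, hχdiv, hχne, hχconf⟩ := extract_cycle src tgt _ hzdiv hzne
  have hχconf' : ∀ e, (χ e = 1 ∧ 0 < h e - vstar e) ∨ (χ e = -1 ∧ h e - vstar e < 0)
      ∨ χ e = 0 := fun e => hχconf e
  have hχval : ∀ e, χ e = 1 ∨ χ e = -1 ∨ χ e = 0 := by
    intro e
    rcases hχconf' e with ⟨h1, _⟩ | ⟨h1, _⟩ | h1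
    · exact Or.inl h1
    · exact Or.inr (Or.inl h1)
    · exact Or.inr (Or.inr h1)
  have hvχFlow : IsFlow src tgt cap bdg (fun e => vstar e + χ e) := by
    constructor
    · intro e
      have hb1 := hhFlow.1 e
      have hb2 := hvFlow.1 e
      show 0 ≤ vstar e + χ e ∧ vstar e + χ e ≤ (cap e : ℤ)
      rcases hχconf' e with ⟨h1, h2⟩ | ⟨h1, h2⟩ | h1 <;> rw [h1] <;> omega
    · intro v
      show divg src tgt _ v = bdg v
      rw [divg_add, hχdiv, add_zero]
      exact hvFlow.2 v
  have hvχF : (fun e => vstar e + χ e) ∈ F := mem_flows.2 hvχFlow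
  have hχc0 : 0 ≤ flowCost c χ := by
    have := hvmin _ hvχF
    rw [flowCost_add] at this
    linarith
  have hhv : h = fun e => vstar e + χ e := by
    by_contra hne'
    have hh'Flow : IsFlow src tgt cap bdg (fun e => h e - χ e) := by
      constructor
      · intro e
        have hb1 := hhFlow.1 e
        have hb2 := hvFlow.1 e
        show 0 ≤ h e - χ e ∧ h e - χ e ≤ (cap e : ℤ)
        rcases hχconf' e with ⟨h1, h2⟩ | ⟨h1, h2⟩ | h1 <;> rw [h1] <;> omega
      · intro v
        show divg src tgt _ v = bdg v
        rw [divg_sub, hχdiv, sub_zero]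
        exact hhFlow.2 v
    have hh'ne : (fun e => h e - χ e) ≠ vstar := by
      intro h0
      apply hne'
      funext e
      have := congrFun h0 e
      omega
    have hh'cost : flowCost c (fun e => h e - χ e) ≤ opt + ε := by
      rw [flowCost_sub]
      linarith
    have hh'H : (fun e => h e - χ e) ∈ H :=
      Finset.mem_filter.2 ⟨mem_flows.2 hh'Flow, hh'ne, hh'cost⟩
    have hlt : (∑ e, ((h e - χ e) - vstar e).natAbs) < ∑ e, (h e - vstar e).natAbs := by
      obtain ⟨e₁, he₁⟩ : ∃ e, χ e ≠ 0 := Function.ne_iff.1 hχne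
      refine Finset.sum_lt_sum (fun e _ => ?_) ⟨e₁, Finset.mem_univ e₁, ?_⟩
      · rcases hχconf' e with ⟨h1, h2⟩ | ⟨h1, h2⟩ | h1 <;> rw [h1] <;> omega
      · rcases hχconf' e₁ with ⟨h1, h2⟩ | ⟨h1, h2⟩ | h1 <;> [skip; skip; exact absurd h1 he₁] <;>
          rw [h1] <;> omega
    have := hhmin _ hh'H
    omega
  have hχcost : flowCost c χ ≤ ε := by
    have h1 : flowCost c h = opt + flowCost c χ := by
      rw [hhv, flowCost_add, hopt]
    linarith
  by_cases hi : ∃ d, χ d = 1 ∧ vstar d = 0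
  · obtain ⟨d, hχd, hvd⟩ := hi
    refine ⟨d, Or.inl ?_⟩
    have h0mem : vstar ∈ classSet src tgt cap bdg d 0 := Finset.mem_filter.2 ⟨hvF, hvd⟩
    have h1mem : h ∈ classSet src tgt cap bdg d 1 := by
      refine Finset.mem_filter.2 ⟨hhF, ?_⟩
      rw [hhv]
      simp only
      rw [hχd, hvd]
      ring
    have hne0 : (classSet src tgt cap bdg d 0).Nonempty := ⟨vstar, h0mem⟩
    have hne1 : (classSet src tgt cap bdg d 1).Nonempty := ⟨h, h1mem⟩
    unfold theta
    rw [dif_pos ⟨hne0, hne1⟩]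
    set A := (classSet src tgt cap bdg d 0).inf' hne0 (restCost d c) with hA
    set B := (classSet src tgt cap bdg d 1).inf' hne1 (restCost d c) with hB
    have hrestv : restCost d c vstar = opt := by
      rw [hopt, flowCost_eq_rest d c vstar, hvd]
      simp
    have hAopt : A = opt := by
      apply le_antisymm
      · rw [← hrestv]
        exact Finset.inf'_le _ h0mem
      · apply Finset.le_inf'
        intro f hf
        have hfF : f ∈ F := (Finset.mem_filter.1 hf).1
        have hfd : f d = (0 : ℤ) := (Finset.mem_filter.1 hf).2
        have hle := hvmin f hfF
        rw [flowCost_eq_rest d c f, hfd] at hle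
        simp at hle
        linarith
    obtain ⟨gm, hgmmem, hgmeq⟩ := Finset.exists_mem_eq_inf' hne1 (restCost d c)
    have hgmF : gm ∈ F := (Finset.mem_filter.1 hgmmem).1
    have hgmd : gm d = (1 : ℤ) := (Finset.mem_filter.1 hgmmem).2
    have hgmopt : opt ≤ B + c d := by
      have hle := hvmin gm hgmF
      rw [flowCost_eq_rest d c gm, hgmd] at hle
      simp at hle
      rw [hB, hgmeq]
      linarith
    have hBh : B ≤ restCost d c h := Finset.inf'_le _ h1mem
    have hresth : restCost d c h = flowCost c h - c d := by
      rw [flowCost_eq_rest d c h]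
      have : h d = (1 : ℤ) := (Finset.mem_filter.1 h1mem).2
      rw [this]
      simp
    constructor
    · linarith
    · have : B ≤ flowCost c h - c d := by rw [← hresth]; exact hBh
      linarith
  · by_cases hii : ∃ d, χ d = -1 ∧ vstar d = (cap d : ℤ)
    · obtain ⟨d, hχd, hvd⟩ := hii
      refine ⟨d, Or.inr ?_⟩
      have h0mem : vstar ∈ classSet src tgt cap bdg d (cap d : ℤ) :=
        Finset.mem_filter.2 ⟨hvF, hvd⟩
      have h1mem : h ∈ classSet src tgt cap bdg d ((cap d : ℤ) - 1) := by
        refine Finset.mem_filter.2 ⟨hhF, ?_⟩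
        rw [hhv]
        simp only
        rw [hχd, hvd]
        ring
      have hne0 : (classSet src tgt cap bdg d ((cap d : ℤ) - 1)).Nonempty := ⟨h, h1mem⟩
      have hne1 : (classSet src tgt cap bdg d (cap d : ℤ)).Nonempty := ⟨vstar, h0mem⟩
      unfold theta
      rw [dif_pos ⟨hne0, hne1⟩]
      set B := (classSet src tgt cap bdg d ((cap d : ℤ) - 1)).inf' hne0 (restCost d c) with hB
      set A := (classSet src tgt cap bdg d (cap d : ℤ)).inf' hne1 (restCost d c) with hA
      have hrestv : restCost d c vstar = opt - c d * (cap d : ℝ) := by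
        rw [hopt, flowCost_eq_rest d c vstar, hvd]
        push_cast
        ring
      have hAopt : A = opt - c d * (cap d : ℝ) := by
        apply le_antisymm
        · rw [← hrestv]
          exact Finset.inf'_le _ h0mem
        · apply Finset.le_inf'
          intro f hf
          have hfF : f ∈ F := (Finset.mem_filter.1 hf).1
          have hfd : f d = (cap d : ℤ) := (Finset.mem_filter.1 hf).2
          have hle := hvmin f hfF
          rw [flowCost_eq_rest d c f, hfd] at hle
          push_cast at hle
          linarith
      obtain ⟨gm, hgmmem, hgmeq⟩ := Finset.exists_mem_eq_inf' hne0 (restCost d c)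
      have hgmF : gm ∈ F := (Finset.mem_filter.1 hgmmem).1
      have hgmd : gm d = (cap d : ℤ) - 1 := (Finset.mem_filter.1 hgmmem).2
      have hgmopt : opt ≤ B + c d * ((cap d : ℝ) - 1) := by
        have hle := hvmin gm hgmF
        rw [flowCost_eq_rest d c gm, hgmd] at hle
        push_cast at hle
        rw [hB, hgmeq]
        linarith
      have hBh : B ≤ restCost d c h := Finset.inf'_le _ h1mem
      have hresth : restCost d c h = flowCost c h - c d * ((cap d : ℝ) - 1) := by
        rw [flowCost_eq_rest d c h]
        have hhd : h d = (cap d : ℤ) - 1 := (Finset.mem_filter.1 h1mem).2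
        rw [hhd]
        push_cast
        ring
      constructor
      · have : B ≤ flowCost c h - c d * ((cap d : ℝ) - 1) := by rw [← hresth]; exact hBh
        nlinarith [this, hhcost, hAopt]
      · nlinarith [hgmopt, hAopt]
    · exfalso
      push_neg at hi hii
      have hvmχFlow : IsFlow src tgt cap bdg (fun e => vstar e - χ e) := by
        constructor
        · intro e
          have hb2 := hvFlow.1 e
          show 0 ≤ vstar e - χ e ∧ vstar e - χ e ≤ (cap e : ℤ)
          rcases hχval e with h1 | h1 | h1
          · have hne0' := hi e h1
            rw [h1]
            omega
          · have hnec := hii e h1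
            rw [h1]
            omega
          · rw [h1]
            omega
        · intro v
          show divg src tgt _ v = bdg v
          rw [divg_sub, hχdiv, sub_zero]
          exact hvFlow.2 v
      have hvmχF : (fun e => vstar e - χ e) ∈ F := mem_flows.2 hvmχFlow
      have hχc0' : flowCost c χ ≤ 0 := by
        have := hvmin _ hvmχF
        rw [flowCost_sub] at this
        linarith
      have hχzero : flowCost c χ = 0 := le_antisymm hχc0' hχc0
      have hvpOpt : (fun e => vstar e + χ e) ∈ Opt := by
        refine Finset.mem_filter.2 ⟨hvχF, ?_⟩
        intro k hk
        rw [flowCost_add, hχzero, add_zero]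
        exact hvmin k hk
      have hvmOpt : (fun e => vstar e - χ e) ∈ Opt := by
        refine Finset.mem_filter.2 ⟨hvmχF, ?_⟩
        intro k hk
        rw [flowCost_sub, hχzero, sub_zero]
        exact hvmin k hk
      have hL1 := hvLmin _ hvpOpt
      have hL2 := hvLmin _ hvmOpt
      rw [Lfun_add] at hL1
      rw [Lfun_sub] at hL2
      have hLne := Lkey χ hχval hχne
      omega

lemma measurable_inf' {α : Type} (s : Finset α) (hs : s.Nonempty) (φf : α → (E → ℝ) → ℝ)
    (hφ : ∀ a, Measurable (φf a)) :
    Measurable fun c : E → ℝ => s.inf' hs fun a => φf a c := by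
  induction hs using Finset.Nonempty.cons_induction with
  | singleton a => exact hφ a
  | cons a s ha hs ih =>
    rw [show (fun c : E → ℝ => (Finset.cons a s ha).inf' (Finset.cons_nonempty ha) fun b => φf b c)
      = fun c : E → ℝ => (φf a c) ⊓ (s.inf' hs fun b => φf b c) from
        funext fun c => Finset.inf'_cons (H := hs) (fun b => φf b c)]
    exact (hφ a).min ih

lemma measurable_restCost (d : E) (f : E → ℤ) :
    Measurable fun c : E → ℝ => restCost d c f := by
  unfold restCost
  exact Finset.measurable_sum _ fun e _ => (measurable_pi_apply e).mul_const _

lemma measurable_theta (src tgt : E → V) (cap : E → ℕ) (bdg : V → ℤ) (d : E) (k₀ k₁ : ℤ) :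
    Measurable (theta src tgt cap bdg d k₀ k₁) := by
  unfold theta
  by_cases h : (classSet src tgt cap bdg d k₀).Nonempty ∧ (classSet src tgt cap bdg d k₁).Nonempty
  · simp only [dif_pos h]
    exact (measurable_inf' _ h.1 _ fun f => measurable_restCost d f).sub
      (measurable_inf' _ h.2 _ fun f => measurable_restCost d f)
  · simp only [dif_neg h]
    exact measurable_const

lemma theta_update (src tgt : E → V) (cap : E → ℕ) (bdg : V → ℤ) (d : E) (k₀ k₁ : ℤ)
    (c : E → ℝ) (t : ℝ) :
    theta src tgt cap bdg d k₀ k₁ (Function.update c d t) = theta src tgt cap bdg d k₀ k₁ c := by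
  unfold theta
  by_cases h : (classSet src tgt cap bdg d k₀).Nonempty ∧ (classSet src tgt cap bdg d k₁).Nonempty
  · simp only [dif_pos h]
    have e0 := Finset.inf'_congr (t := classSet src tgt cap bdg d k₀) h.1 rfl
      (fun f _ => restCost_update d c t f)
    have e1 := Finset.inf'_congr (t := classSet src tgt cap bdg d k₁) h.2 rfl
      (fun f _ => restCost_update d c t f)
    rw [e0, e1]
  · simp only [dif_neg h]

lemma slab_measure (μs : E → Measure ℝ) [∀ e, IsProbabilityMeasure (μs e)]
    (d : E) (Θ : (E → ℝ) → ℝ) (hΘ : Measurable Θ)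
    (hind : ∀ x t, Θ (Function.update x d t) = Θ x)
    (ε : ℝ) (K : ℝ≥0∞) (hK : ∀ r : ℝ, μs d (Set.Icc r (r + ε)) ≤ K) :
    Measure.pi μs {c | Θ c ≤ c d ∧ c d ≤ Θ c + ε} ≤ K := by
  have hS : MeasurableSet {c : E → ℝ | Θ c ≤ c d ∧ c d ≤ Θ c + ε} :=
    (measurableSet_le hΘ (measurable_pi_apply d)).inter
      (measurableSet_le (measurable_pi_apply d) (hΘ.add_const ε))
  set S := {c : E → ℝ | Θ c ≤ c d ∧ c d ≤ Θ c + ε} with hSdef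
  have hmeasind : Measurable (S.indicator (1 : (E → ℝ) → ℝ≥0∞)) := measurable_one.indicator hS
  rw [← lintegral_indicator_one hS]
  rw [lintegral_eq_lmarginal_univ (μ := μs) (fun _ => 0)]
  rw [← Finset.insert_erase (Finset.mem_univ d),
    lmarginal_insert' _ hmeasind (Finset.notMem_erase d Finset.univ)]
  have hb : (fun x => ∫⁻ t, S.indicator (1 : (E → ℝ) → ℝ≥0∞) (Function.update x d t) ∂(μs d))
      ≤ fun _ => K := by
    intro x
    have heq : ∀ t : ℝ, S.indicator (1 : (E → ℝ) → ℝ≥0∞) (Function.update x d t)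
        = (Set.Icc (Θ x) (Θ x + ε)).indicator (1 : ℝ → ℝ≥0∞) t := by
      intro t
      by_cases ht : t ∈ Set.Icc (Θ x) (Θ x + ε)
      · rw [Set.indicator_of_mem ht]
        have hmem : Function.update x d t ∈ S := by
          rw [hSdef]
          refine ⟨?_, ?_⟩ <;>
            rw [hind x t, Function.update_self] <;>
              [exact ht.1; exact ht.2]
        rw [Set.indicator_of_mem hmem]
        rfl
      · rw [Set.indicator_of_notMem ht]
        have hmem : Function.update x d t ∉ S := by
          rw [hSdef]
          intro hc
          obtain ⟨h1, h2⟩ := hc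
          rw [hind x t, Function.update_self] at h1 h2
          exact ht ⟨h1, h2⟩
        rw [Set.indicator_of_notMem hmem]
    calc ∫⁻ t, S.indicator (1 : (E → ℝ) → ℝ≥0∞) (Function.update x d t) ∂(μs d)
        = ∫⁻ t, (Set.Icc (Θ x) (Θ x + ε)).indicator (1 : ℝ → ℝ≥0∞) t ∂(μs d) :=
          lintegral_congr heq
      _ = μs d (Set.Icc (Θ x) (Θ x + ε)) := lintegral_indicator_one measurableSet_Icc
      _ ≤ K := hK (Θ x)
  refine le_trans (lmarginal_mono (s := Finset.univ.erase d) hb (fun _ => 0)) ?_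
  rw [lmarginal]
  simp [lintegral_const]

end RCP

/-- If the edge costs are independent random variables with values in `[0,1]` whose
densities are bounded by `φ`, and at least two feasible integer flows exist, then for
every `ε > 0` the probability that some directed cycle in the residual network of a
min-cost flow `f*` has cost at most `ε` (i.e. that `Δ ≤ ε`) is at most `2 ε φ m`. -/
theorem residual_cycle_prob
    {V E : Type} [Fintype V] [Fintype E] [DecidableEq V]
    (src tgt : E → V) (cap : E → ℕ) (bdg : V → ℤ)
    (φ ε : ℝ) (hε : 0 < ε)
    (g : E → ℝ → ENNReal)
    (hgmeas : ∀ e, Measurable (g e))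
    (hgbound : ∀ e x, g e x ≤ ENNReal.ofReal φ)
    (hgsupp : ∀ e x, x ∉ Set.Icc (0 : ℝ) 1 → g e x = 0)
    (hgprob : ∀ e, IsProbabilityMeasure ((volume : Measure ℝ).withDensity (g e)))
    (htwo : ∃ f₁ f₂ : E → ℤ, IsFlow src tgt cap bdg f₁ ∧ IsFlow src tgt cap bdg f₂ ∧ f₁ ≠ f₂) :
    Measure.pi (fun e : E => (volume : Measure ℝ).withDensity (g e))
      {c : E → ℝ | ∃ fstar : E → ℤ,
        IsFlow src tgt cap bdg fstar ∧
        (∀ f, IsFlow src tgt cap bdg f → flowCost c fstar ≤ flowCost c f) ∧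
        ∃ (len : ℕ) (vtx : Fin len → V) (arc : Fin len → E × Bool),
          IsResidualCycle src tgt cap fstar vtx arc ∧ cycleCost c arc ≤ ε} ≤
      ENNReal.ofReal (2 * ε * φ * (Fintype.card E)) := by
  classical
  haveI : ∀ e : E, IsProbabilityMeasure ((volume : Measure ℝ).withDensity (g e)) := hgprob
  obtain ⟨f₁, f₂, hf₁, hf₂, hf12⟩ := htwo
  have hEne : Nonempty E := by
    by_contra hne
    exact hf12 (funext fun e => absurd ⟨e⟩ hne)
  have hφ : 0 ≤ φ := by
    by_contra hneg
    push_neg at hneg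
    obtain ⟨e₀⟩ := hEne
    have hz : g e₀ = 0 := by
      funext x
      have h1 := hgbound e₀ x
      rw [ENNReal.ofReal_eq_zero.2 hneg.le] at h1
      exact le_antisymm h1 zero_le
    have h1 : ((volume : Measure ℝ).withDensity (g e₀)) Set.univ = 1 := measure_univ
    rw [hz] at h1
    simp at h1
  have hcov : {c : E → ℝ | ∃ fstar : E → ℤ,
      IsFlow src tgt cap bdg fstar ∧
      (∀ f, IsFlow src tgt cap bdg f → flowCost c fstar ≤ flowCost c f) ∧
      ∃ (len : ℕ) (vtx : Fin len → V) (arc : Fin len → E × Bool),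
        IsResidualCycle src tgt cap fstar vtx arc ∧ cycleCost c arc ≤ ε}
      ⊆ ⋃ d : E,
        ({c : E → ℝ | RCP.theta src tgt cap bdg d 0 1 c ≤ c d ∧
            c d ≤ RCP.theta src tgt cap bdg d 0 1 c + ε} ∪
         {c : E → ℝ | RCP.theta src tgt cap bdg d ((cap d : ℤ) - 1) (cap d : ℤ) c - ε ≤ c d ∧
            c d ≤ RCP.theta src tgt cap bdg d ((cap d : ℤ) - 1) (cap d : ℤ) c}) := by
    intro c hc
    obtain ⟨d, hd⟩ := RCP.main_cover src tgt cap bdg ε hε c hc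
    exact Set.mem_iUnion.2 ⟨d, hd⟩
  have hKIcc : ∀ (e : E) (r : ℝ),
      ((volume : Measure ℝ).withDensity (g e)) (Set.Icc r (r + ε))
        ≤ ENNReal.ofReal φ * ENNReal.ofReal ε := by
    intro e r
    rw [withDensity_apply _ measurableSet_Icc]
    calc ∫⁻ x in Set.Icc r (r + ε), g e x ∂volume
        ≤ ∫⁻ _ in Set.Icc r (r + ε), ENNReal.ofReal φ ∂volume :=
          lintegral_mono fun x => hgbound e x
      _ = ENNReal.ofReal φ * volume (Set.Icc r (r + ε)) := setLIntegral_const _ _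
      _ = ENNReal.ofReal φ * ENNReal.ofReal ε := by
          rw [Real.volume_Icc]
          congr 2
          ring
  have hplus : ∀ d : E,
      Measure.pi (fun e : E => (volume : Measure ℝ).withDensity (g e))
        {c : E → ℝ | RCP.theta src tgt cap bdg d 0 1 c ≤ c d ∧
          c d ≤ RCP.theta src tgt cap bdg d 0 1 c + ε}
        ≤ ENNReal.ofReal φ * ENNReal.ofReal ε := by
    intro d
    exact RCP.slab_measure _ d _ (RCP.measurable_theta src tgt cap bdg d 0 1)
      (fun x t => RCP.theta_update src tgt cap bdg d 0 1 x t) ε _ (fun r => hKIcc d r)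
  have hminus : ∀ d : E,
      Measure.pi (fun e : E => (volume : Measure ℝ).withDensity (g e))
        {c : E → ℝ | RCP.theta src tgt cap bdg d ((cap d : ℤ) - 1) (cap d : ℤ) c - ε ≤ c d ∧
          c d ≤ RCP.theta src tgt cap bdg d ((cap d : ℤ) - 1) (cap d : ℤ) c}
        ≤ ENNReal.ofReal φ * ENNReal.ofReal ε := by
    intro d
    have hseteq : {c : E → ℝ |
          RCP.theta src tgt cap bdg d ((cap d : ℤ) - 1) (cap d : ℤ) c - ε ≤ c d ∧
          c d ≤ RCP.theta src tgt cap bdg d ((cap d : ℤ) - 1) (cap d : ℤ) c}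
        = {c : E → ℝ |
          (fun c' : E → ℝ =>
            RCP.theta src tgt cap bdg d ((cap d : ℤ) - 1) (cap d : ℤ) c' - ε) c ≤ c d ∧
          c d ≤ (fun c' : E → ℝ =>
            RCP.theta src tgt cap bdg d ((cap d : ℤ) - 1) (cap d : ℤ) c' - ε) c + ε} := by
      ext c
      simp only [Set.mem_setOf_eq]
      constructor <;> rintro ⟨h1, h2⟩ <;> exact ⟨by linarith, by linarith⟩
    rw [hseteq]
    exact RCP.slab_measure _ d _
      ((RCP.measurable_theta src tgt cap bdg d ((cap d : ℤ) - 1) (cap d : ℤ)).sub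
        measurable_const)
      (fun x t =>
        show RCP.theta src tgt cap bdg d ((cap d : ℤ) - 1) (cap d : ℤ)
            (Function.update x d t) - ε
          = RCP.theta src tgt cap bdg d ((cap d : ℤ) - 1) (cap d : ℤ) x - ε from by
        rw [RCP.theta_update src tgt cap bdg d ((cap d : ℤ) - 1) (cap d : ℤ) x t])
      ε _ (fun r => hKIcc d r)
  refine le_trans (measure_mono hcov) ?_
  refine le_trans (measure_iUnion_le _) ?_
  have hsum : ∑' d : E,
      (Measure.pi fun e : E => (volume : Measure ℝ).withDensity (g e))
        ({c : E → ℝ | RCP.theta src tgt cap bdg d 0 1 c ≤ c d ∧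
            c d ≤ RCP.theta src tgt cap bdg d 0 1 c + ε} ∪
         {c : E → ℝ | RCP.theta src tgt cap bdg d ((cap d : ℤ) - 1) (cap d : ℤ) c - ε ≤ c d ∧
            c d ≤ RCP.theta src tgt cap bdg d ((cap d : ℤ) - 1) (cap d : ℤ) c})
      ≤ ∑' _d : E, ((ENNReal.ofReal φ * ENNReal.ofReal ε)
          + (ENNReal.ofReal φ * ENNReal.ofReal ε)) :=
    ENNReal.tsum_le_tsum (fun d =>
      le_trans (measure_union_le _ _) (add_le_add (hplus d) (hminus d)))
  refine le_trans hsum ?_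
  rw [tsum_fintype, Finset.sum_const, Finset.card_univ, nsmul_eq_mul]
  rw [show (2 : ℝ) * ε * φ * (Fintype.card E) = ((2 * ε) * φ) * (Fintype.card E) by ring]
  rw [ENNReal.ofReal_mul (by nlinarith : (0 : ℝ) ≤ (2 * ε) * φ),
    ENNReal.ofReal_mul (by linarith : (0 : ℝ) ≤ 2 * ε),
    ENNReal.ofReal_mul (by norm_num : (0 : ℝ) ≤ 2),
    ENNReal.ofReal_natCast, ENNReal.ofReal_ofNat]
  apply le_of_eq
  ring
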